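/- arXiv:0710.2929 — 4 statements merged into one kernel-verified Lean document; each statement's English description precedes it below -/
import Mathlib

section
/- For all integers d ≥ 1, n ≥ 1, and every z, the alternating convolution identity ∑_{i=0}^{d} (-1)^{i+1} · binom(n+i-1, n) · binom(z, d-i) = binom(z-n-1, d-1) holds, where binom denotes the Stirling polynomial. -/
/-- Stirling polynomial `binom(z,n)`. -/
noncomputable def sbinom (z : ℚ) (n : ℕ) : ℚ :=
  (∏ i ∈ Finset.range n, (z - i)) / (n.factorial : ℚ)

lemma descPochhammer_smeval_prod (z : ℚ) (k : ℕ) :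
    (descPochhammer ℤ k).smeval z = ∏ i ∈ Finset.range k, (z - i) := by
  induction k with
  | zero => simp [descPochhammer_zero]
  | succ k ih =>
    rw [descPochhammer_succ_right, Polynomial.smeval_mul, ih, Finset.prod_range_succ,
      Polynomial.smeval_sub, Polynomial.smeval_X, Polynomial.smeval_natCast]
    simp

lemma sbinom_eq_choose (z : ℚ) (k : ℕ) : sbinom z k = Ring.choose z k := by
  have h := Ring.descPochhammer_eq_factorial_smul_choose z k
  rw [descPochhammer_smeval_prod] at h
  rw [sbinom, h, nsmul_eq_mul]
  field_simp

lemma sbinom_natCast (m k : ℕ) : sbinom (m : ℚ) k = (m.choose k : ℚ) := by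
  rw [sbinom_eq_choose, Ring.choose_natCast]

lemma sbinom_neg (n j : ℕ) :
    sbinom (-(n : ℚ) - 1) j = (-1) ^ j * ((n + j).choose j : ℚ) := by
  have h1 : ∏ i ∈ Finset.range j, (-(n : ℚ) - 1 - i)
      = (-1) ^ j * ∏ i ∈ Finset.range j, ((n : ℚ) + 1 + i) := by
    rw [show ((-1:ℚ))^j = (-1)^(Finset.range j).card by simp, Finset.pow_card_mul_prod]
    exact Finset.prod_congr rfl fun i _ => by ring
  have h2 : ∏ i ∈ Finset.range j, (((n + j : ℕ) : ℚ) - i)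
      = ∏ i ∈ Finset.range j, ((n : ℚ) + 1 + i) := by
    rw [← Finset.prod_range_reflect]
    refine Finset.prod_congr rfl fun i hi => ?_
    have hij : i < j := Finset.mem_range.mp hi
    push_cast [Nat.cast_sub (by omega : j - 1 - i ≤ j)]
    have : ((j - 1 - i : ℕ) : ℚ) = (j : ℚ) - 1 - i := by
      push_cast [Nat.cast_sub (by omega : i ≤ j - 1), Nat.cast_sub (by omega : 1 ≤ j)]
      ring
    rw [this]; ring
  have h3 := sbinom_natCast (n + j) j
  rw [sbinom, h2] at h3
  rw [sbinom, h1, mul_div_assoc, h3]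

theorem stirling_alternating_convolution (d n : ℕ) (hd : 1 ≤ d) (hn : 1 ≤ n) (z : ℚ) :
    ∑ i ∈ Finset.range (d + 1),
      (-1 : ℚ) ^ (i + 1) * sbinom ((n : ℚ) + i - 1) n * sbinom z (d - i)
      = sbinom (z - n - 1) (d - 1) := by
  obtain ⟨m, rfl⟩ : ∃ m, d = m + 1 := ⟨d - 1, by omega⟩
  rw [Finset.sum_range_succ']
  have h0 : (-1 : ℚ) ^ (0 + 1) * sbinom ((n : ℚ) + (0:ℕ) - 1) n * sbinom z (m + 1 - 0) = 0 := by
    have : ((n : ℚ) + ((0:ℕ):ℚ) - 1) = ((n - 1 : ℕ) : ℚ) := by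
      push_cast [Nat.cast_sub hn]; ring
    rw [this, sbinom_natCast, Nat.choose_eq_zero_of_lt (by omega)]
    simp
  rw [h0, add_zero]
  have hstep : ∀ j, j ∈ Finset.range (m + 1) →
      (-1 : ℚ) ^ (j + 1 + 1) * sbinom ((n : ℚ) + ((j + 1 : ℕ) : ℚ) - 1) n * sbinom z (m + 1 - (j + 1))
      = Ring.choose (-(n : ℚ) - 1) j * Ring.choose z (m - j) := by
    intro j hj
    have harg : (n : ℚ) + ((j + 1 : ℕ) : ℚ) - 1 = ((n + j : ℕ) : ℚ) := by push_cast; ring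
    rw [harg, sbinom_natCast, show m + 1 - (j + 1) = m - j by omega,
      pow_succ, pow_succ, mul_neg_one, mul_neg_one, neg_neg,
      show Nat.choose (n + j) n = Nat.choose (n + j) j from Nat.choose_symm_add,
      ← sbinom_neg n j, sbinom_eq_choose, sbinom_eq_choose z]
  rw [Finset.sum_congr rfl hstep]
  have hV := Ring.add_choose_eq (r := -(n : ℚ) - 1) (s := z) m (Commute.all _ _)
  rw [Finset.Nat.sum_antidiagonal_eq_sum_range_succ_mk] at hV
  rw [← hV, show (m + 1 - 1 : ℕ) = m from rfl, sbinom_eq_choose]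
  congr 1
  ring
end

section
/- For every integer N ≥ 1 and complex q with |q| < 1, one has ∏_{n=1}^{N-1} (1 - q^n)^{N-n} = (q;q)_∞^N · (q^{N+1}; q)_∞^{(2)} / (q;q)_∞^{(2)}, where (a;q)_∞ := ∏_{i=0}^∞ (1 - a q^i) and (a;q)_∞^{(2)} := ∏_{i,j=0}^∞ (1 - a q^{i+j}). -/
/-- The q-shifted factorial `(a;q)_∞ = ∏_{i≥0} (1 - a qⁱ)`. -/
noncomputable def qfac (a q : ℂ) : ℂ := ∏' i : ℕ, (1 - a * q ^ i)

/-- The q-bifactorial `(a;q)_∞^{(2)} = ∏_{i,j≥0} (1 - a q^{i+j})`. -/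
noncomputable def qbifac (a q : ℂ) : ℂ := ∏' p : ℕ × ℕ, (1 - a * q ^ (p.1 + p.2))

/- ### Auxiliary lemmas -/

lemma summable_log_one_add {ι : Type*} (f : ι → ℂ) (hf : Summable f)
    (h : ∀ i, 1 + f i ≠ 0) : Summable fun i => Complex.log (1 + f i) := by
  have h0 : ∀ᶠ i in Filter.cofinite, ‖f i‖ ≤ 1 / 2 := by
    have := hf.tendsto_cofinite_zero (Metric.closedBall_mem_nhds (0 : ℂ) (by norm_num : (0:ℝ) < 1/2))
    filter_upwards [this] with i hi
    simpa [Metric.mem_closedBall, dist_eq_norm] using hi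
  refine Summable.of_norm_bounded_eventually (g := fun i => 3 / 2 * ‖f i‖) (hf.norm.mul_left _) ?_
  filter_upwards [h0] with i hi
  exact Complex.norm_log_one_add_half_le_self hi

lemma multipliable_one_add {ι : Type*} (f : ι → ℂ) (hf : Summable f)
    (h : ∀ i, 1 + f i ≠ 0) : Multipliable fun i => 1 + f i :=
  Complex.multipliable_of_summable_log (summable_log_one_add f hf h)

lemma tprod_one_add_ne_zero {ι : Type*} (f : ι → ℂ) (hf : Summable f)
    (h : ∀ i, 1 + f i ≠ 0) : (∏' i, (1 + f i)) ≠ 0 := by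
  have h2 := Complex.cexp_tsum_eq_tprod h (summable_log_one_add f hf h)
  rw [← h2]
  exact Complex.exp_ne_zero _

lemma aux_ne (a q : ℂ) (ha : ‖a‖ < 1) (hq : ‖q‖ < 1) (k : ℕ) :
    1 - a * q ^ k ≠ 0 := by
  have hlt : ‖a * q ^ k‖ < 1 := by
    rw [norm_mul, norm_pow]
    calc ‖a‖ * ‖q‖ ^ k ≤ ‖a‖ * 1 :=
          mul_le_mul_of_nonneg_left (pow_le_one₀ (norm_nonneg q) hq.le)
            (norm_nonneg a)
      _ < 1 := by simpa using ha
  intro h0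
  rw [sub_eq_zero] at h0
  rw [← h0] at hlt
  simp at hlt

lemma aux_summable (a q : ℂ) (hq : ‖q‖ < 1) :
    Summable fun n : ℕ => -(a * q ^ n) := by
  have hq' : ‖q‖ < 1 := by simpa using hq
  exact ((summable_geometric_of_norm_lt_one hq').mul_left (-a)).congr (fun n => by ring)

lemma aux_summable_pair (a q : ℂ) (hq : ‖q‖ < 1) :
    Summable fun p : ℕ × ℕ => -(a * q ^ (p.1 + p.2)) := by
  have hq' : ‖q‖ < 1 := by simpa using hq
  have h1 : Summable fun n : ℕ => ‖q ^ n‖ := (summable_geometric_of_norm_lt_one hq').norm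
  have h2 : Summable fun p : ℕ × ℕ => q ^ p.1 * q ^ p.2 :=
    summable_mul_of_summable_norm h1 h1
  exact (h2.mul_left (-a)).congr (fun p => by rw [pow_add]; ring)

lemma qfac_mult (a q : ℂ) (ha : ‖a‖ < 1) (hq : ‖q‖ < 1) :
    Multipliable fun j : ℕ => 1 - a * q ^ j :=
  (multipliable_one_add _ (aux_summable a q hq)
    (fun i => by simpa [sub_eq_add_neg] using aux_ne a q ha hq i)).congr
    (fun i => by ring)

lemma qfac_ne_zero (a q : ℂ) (ha : ‖a‖ < 1) (hq : ‖q‖ < 1) :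
    qfac a q ≠ 0 := by
  have := tprod_one_add_ne_zero _ (aux_summable a q hq)
    (fun i => by simpa [sub_eq_add_neg] using aux_ne a q ha hq i)
  rw [qfac]
  have he : (fun i : ℕ => 1 - a * q ^ i) = fun i : ℕ => 1 + -(a * q ^ i) := by
    funext i; ring
  rw [he]
  exact this

lemma qbifac_mult (a q : ℂ) (ha : ‖a‖ < 1) (hq : ‖q‖ < 1) :
    Multipliable fun p : ℕ × ℕ => 1 - a * q ^ (p.1 + p.2) :=
  (multipliable_one_add _ (aux_summable_pair a q hq)
    (fun p => by simpa [sub_eq_add_neg] using aux_ne a q ha hq (p.1 + p.2))).congr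
    (fun p => by ring)

lemma qbifac_ne_zero (a q : ℂ) (ha : ‖a‖ < 1) (hq : ‖q‖ < 1) :
    qbifac a q ≠ 0 := by
  have := tprod_one_add_ne_zero _ (aux_summable_pair a q hq)
    (fun p => by simpa [sub_eq_add_neg] using aux_ne a q ha hq (p.1 + p.2))
  rw [qbifac]
  have he : (fun p : ℕ × ℕ => 1 - a * q ^ (p.1 + p.2))
      = fun p : ℕ × ℕ => 1 + -(a * q ^ (p.1 + p.2)) := by
    funext p; ring
  rw [he]
  exact this

lemma abs_mul_pow_lt (a q : ℂ) (ha : ‖a‖ < 1) (hq : ‖q‖ < 1) (k : ℕ) :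
    ‖a * q ^ k‖ < 1 := by
  rw [norm_mul, norm_pow]
  calc ‖a‖ * ‖q‖ ^ k ≤ ‖a‖ * 1 :=
        mul_le_mul_of_nonneg_left (pow_le_one₀ (norm_nonneg q) hq.le)
          (norm_nonneg a)
    _ < 1 := by simpa using ha

/-- `qbifac a q = ∏' i, qfac (a q^i) q`. -/
lemma qbifac_eq_tprod_qfac (a q : ℂ) (ha : ‖a‖ < 1) (hq : ‖q‖ < 1) :
    qbifac a q = ∏' i : ℕ, qfac (a * q ^ i) q := by
  have hfib : ∀ b : ℕ, Multipliable fun c : ℕ => 1 - a * q ^ (b + c) := fun b =>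
    (qfac_mult (a * q ^ b) q (abs_mul_pow_lt a q ha hq b) hq).congr
      (fun c => by rw [mul_assoc, ← pow_add])
  rw [qbifac, (qbifac_mult a q ha hq).tprod_prod' hfib]
  refine tprod_congr fun i => ?_
  rw [qfac]
  refine tprod_congr fun j => ?_
  rw [mul_assoc, ← pow_add]

lemma multipliable_qfac_mul_pow (a q : ℂ) (ha : ‖a‖ < 1)
    (hq : ‖q‖ < 1) : Multipliable fun i : ℕ => qfac (a * q ^ i) q := by
  have hsig : Multipliable fun p : (Σ _ : ℕ, ℕ) => 1 - a * q ^ (p.1 + p.2) :=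
    ((Equiv.sigmaEquivProd ℕ ℕ).multipliable_iff.mpr
      (qbifac_mult a q ha hq)).congr (fun p => rfl)
  have h2 := hsig.sigma' (fun b =>
    (qfac_mult (a * q ^ b) q (abs_mul_pow_lt a q ha hq b) hq).congr
      (fun c => by rw [mul_assoc, ← pow_add]))
  refine h2.congr fun b => ?_
  rw [qfac]
  exact tprod_congr fun c => by rw [mul_assoc, ← pow_add]

/-- Peeling off the first `k` columns of the bifactorial. -/
lemma qbifac_peel (a q : ℂ) (ha : ‖a‖ < 1) (hq : ‖q‖ < 1) (k : ℕ) :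
    qbifac a q = (∏ i ∈ Finset.range k, qfac (a * q ^ i) q) * qbifac (a * q ^ k) q := by
  have hm : Multipliable fun n : ℕ => qfac (a * q ^ (n + k)) q := by
    refine (multipliable_qfac_mul_pow (a * q ^ k) q (abs_mul_pow_lt a q ha hq k) hq).congr
      fun n => ?_
    rw [mul_assoc, ← pow_add]
    ring_nf
  have key := Multipliable.prod_mul_tprod_nat_mul' (f := fun i : ℕ => qfac (a * q ^ i) q) (k := k) hm
  rw [qbifac_eq_tprod_qfac a q ha hq, ← key,
    qbifac_eq_tprod_qfac (a * q ^ k) q (abs_mul_pow_lt a q ha hq k) hq]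
  congr 1
  refine tprod_congr fun i => ?_
  rw [mul_assoc, ← pow_add]
  ring_nf

/-- Peeling off the first `k` factors of the q-factorial. -/
lemma qfac_peel (a q : ℂ) (ha : ‖a‖ < 1) (hq : ‖q‖ < 1) (k : ℕ) :
    qfac a q = (∏ i ∈ Finset.range k, (1 - a * q ^ i)) * qfac (a * q ^ k) q := by
  have hm : Multipliable fun n : ℕ => 1 - a * q ^ (n + k) := by
    refine (qfac_mult (a * q ^ k) q (abs_mul_pow_lt a q ha hq k) hq).congr fun n => ?_
    rw [mul_assoc, ← pow_add]
    ring_nf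
  have key := Multipliable.prod_mul_tprod_nat_mul' (f := fun i : ℕ => 1 - a * q ^ i) (k := k) hm
  rw [qfac, ← key]
  congr 1
  rw [qfac]
  refine tprod_congr fun i => ?_
  rw [mul_assoc, ← pow_add]
  ring_nf

lemma prod_prod_range {t : ℕ → ℂ} (N : ℕ) :
    ∏ i ∈ Finset.range N, ∏ n ∈ Finset.range i, t n
      = ∏ n ∈ Finset.range N, t n ^ (N - 1 - n) := by
  induction N with
  | zero => simp
  | succ N ih =>
    rw [Finset.prod_range_succ, ih]
    rw [Finset.prod_range_succ (f := fun n => t n ^ (N + 1 - 1 - n))]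
    have h1 : t N ^ (N + 1 - 1 - N) = 1 := by simp
    rw [h1, mul_one, ← Finset.prod_mul_distrib]
    refine Finset.prod_congr rfl fun n hn => ?_
    rw [Finset.mem_range] at hn
    rw [← pow_succ]
    congr 1
    omega

theorem finite_product_as_ratio (N : ℕ) (hN : 1 ≤ N) (q : ℂ) (hq : ‖q‖ < 1) :
    ∏ n ∈ Finset.Icc 1 (N - 1), (1 - q ^ n) ^ (N - n)
    = qfac q q ^ N * qbifac (q ^ (N + 1)) q / qbifac q q := by
  have ha : ‖q‖ < 1 := hq
  -- nonvanishing
  have hB : qbifac q q ≠ 0 := qbifac_ne_zero q q ha hq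
  have hBN : qbifac (q ^ (N + 1)) q ≠ 0 := by
    have : ‖q ^ (N + 1)‖ < 1 := by
      rw [pow_succ']
      exact abs_mul_pow_lt q q ha hq N
    exact qbifac_ne_zero _ q this hq
  have hQ : ∀ i : ℕ, qfac (q * q ^ i) q ≠ 0 := fun i =>
    qfac_ne_zero _ q (abs_mul_pow_lt q q ha hq i) hq
  -- the peeled identities
  have hpeel := qbifac_peel q q ha hq N
  have hfac : ∀ i : ℕ, qfac q q
      = (∏ n ∈ Finset.range i, (1 - q * q ^ n)) * qfac (q * q ^ i) q :=
    fun i => qfac_peel q q ha hq i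
  have hqpow : q * q ^ N = q ^ (N + 1) := by ring
  rw [hqpow] at hpeel
  -- reduce to an identity about finite products
  rw [eq_div_iff hB, hpeel]
  have key : (∏ n ∈ Finset.Icc 1 (N - 1), (1 - q ^ n) ^ (N - n))
      * ∏ i ∈ Finset.range N, qfac (q * q ^ i) q = qfac q q ^ N := by
    have hLHS : (∏ n ∈ Finset.Icc 1 (N - 1), (1 - q ^ n) ^ (N - n))
        = ∏ i ∈ Finset.range N, ∏ n ∈ Finset.range i, (1 - q * q ^ n) := by
      rw [prod_prod_range]
      have hrw : ∀ n : ℕ, (1 : ℂ) - q * q ^ n = 1 - q ^ (n + 1) := by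
        intro n; ring_nf
      calc ∏ n ∈ Finset.Icc 1 (N - 1), (1 - q ^ n) ^ (N - n)
          = ∏ n ∈ Finset.Ico 1 N, (1 - q ^ n) ^ (N - n) := by
            rw [← Finset.Ico_add_one_right_eq_Icc, Nat.sub_add_cancel hN]
        _ = ∏ n ∈ Finset.range (N - 1), (1 - q ^ (1 + n)) ^ (N - (1 + n)) :=
            Finset.prod_Ico_eq_prod_range _ 1 N
        _ = ∏ n ∈ Finset.range (N - 1), (1 - q ^ (n + 1)) ^ (N - 1 - n) := by
            refine Finset.prod_congr rfl fun n hn => ?_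
            rw [Finset.mem_range] at hn
            have h1 : 1 + n = n + 1 := by omega
            rw [h1]
            congr 1
            omega
        _ = ∏ n ∈ Finset.range N, (1 - q ^ (n + 1)) ^ (N - 1 - n) := by
            obtain ⟨M, rfl⟩ : ∃ M, N = M + 1 := ⟨N - 1, by omega⟩
            rw [Finset.prod_range_succ]
            simp
        _ = ∏ n ∈ Finset.range N, (1 - q * q ^ n) ^ (N - 1 - n) := by
            refine Finset.prod_congr rfl fun n _ => ?_
            rw [hrw]
    rw [hLHS, ← Finset.prod_mul_distrib]
    calc ∏ i ∈ Finset.range N, (∏ n ∈ Finset.range i, (1 - q * q ^ n)) * qfac (q * q ^ i) q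
        = ∏ _i ∈ Finset.range N, qfac q q :=
          Finset.prod_congr rfl fun i _ => (hfac i).symm
      _ = qfac q q ^ N := by simp [Finset.prod_const]
  calc (∏ n ∈ Finset.Icc 1 (N - 1), (1 - q ^ n) ^ (N - n))
      * ((∏ i ∈ Finset.range N, qfac (q * q ^ i) q) * qbifac (q ^ (N + 1)) q)
      = ((∏ n ∈ Finset.Icc 1 (N - 1), (1 - q ^ n) ^ (N - n))
        * ∏ i ∈ Finset.range N, qfac (q * q ^ i) q) * qbifac (q ^ (N + 1)) q := by ring
    _ = qfac q q ^ N * qbifac (q ^ (N + 1)) q := by rw [key]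
end

section
/- For real x > 0, the logarithm of the MacMahon function satisfies ln M(e^{-x}) = ∑_{k=1}^∞ (1/(4k)) csch²(kx/2), where M(q) := ∏_{n=1}^∞ (1-q^n)^{-n} and csch(z) = 1/sinh(z). -/
open Real

/-- Auxiliary: `e^{-2u}/(1-e^{-2u})² = csch²(u)/4` for `u > 0`. -/
lemma csch_aux {u : ℝ} (hu : 0 < u) :
    Real.exp (-(2 * u)) / (1 - Real.exp (-(2 * u))) ^ 2
      = (1 / Real.sinh u) ^ 2 / 4 := by
  have ha : Real.exp (-(2 * u)) = Real.exp (-u) * Real.exp (-u) := by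
    rw [← Real.exp_add]; ring_nf
  have hab : Real.exp u * Real.exp (-u) = 1 := by
    rw [← Real.exp_add]; simp
  have hba : Real.exp (-u) < Real.exp u := by
    apply Real.exp_lt_exp.mpr; linarith
  have hb : 0 < Real.exp (-u) := Real.exp_pos _
  rw [ha, Real.sinh_eq]
  set a := Real.exp u
  set b := Real.exp (-u)
  have hd : a - b ≠ 0 := sub_ne_zero.mpr (ne_of_gt hba)
  have h1 : 1 - b * b = b * (a - b) := by
    rw [mul_sub, mul_comm b a, hab]
  rw [h1]
  field_simp
  ring

/-- `ln M(e^{-x}) = ∑_{k≥1} csch²(kx/2)/(4k)` for `x > 0`, where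
`M(q) = ∏_{n≥1}(1-qⁿ)^{-n}` is the MacMahon function. -/
theorem log_macmahon_csch_sum (x : ℝ) (hx : 0 < x) :
    Real.log (∏' n : ℕ, (1 - Real.exp (-((n : ℝ) + 1) * x)) ^ (-((n : ℤ) + 1)))
    = ∑' k : ℕ, (1 / Real.sinh (((k : ℝ) + 1) * x / 2)) ^ 2 / (4 * ((k : ℝ) + 1)) := by
  set q := Real.exp (-x) with hqdef
  have hq0 : 0 < q := Real.exp_pos _
  have hq1 : q < 1 := by
    rw [hqdef, Real.exp_lt_one_iff]; linarith
  have hexp : ∀ n : ℕ, Real.exp (-((n : ℝ) + 1) * x) = q ^ (n + 1) := by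
    intro n
    rw [hqdef, ← Real.exp_nat_mul]
    congr 1; push_cast; ring
  have hqn1 : ∀ n : ℕ, q ^ (n + 1) < 1 := fun n =>
    pow_lt_one₀ hq0.le hq1 (Nat.succ_ne_zero n)
  have hqn0 : ∀ n : ℕ, 0 < q ^ (n + 1) := fun n => pow_pos hq0 _
  have h1q : ∀ n : ℕ, 0 < 1 - q ^ (n + 1) := fun n => by
    have := hqn1 n; linarith
  -- the double-indexed family
  set f : ℕ → ℕ → ℝ :=
    fun m n => ((n : ℝ) + 1) * ((q ^ (n + 1)) ^ (m + 1) / ((m : ℝ) + 1)) with hfdef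
  have hf_nonneg : ∀ m n, 0 ≤ f m n := by
    intro m n
    apply mul_nonneg (by positivity)
    apply div_nonneg (by positivity) (by positivity)
  -- sum over m (log series)
  have Hn : ∀ n : ℕ, HasSum (fun m => f m n)
      (((n : ℝ) + 1) * (-Real.log (1 - q ^ (n + 1)))) := by
    intro n
    exact (Real.hasSum_pow_div_log_of_abs_lt_one
      (by rw [abs_of_pos (hqn0 n)]; exact hqn1 n)).mul_left _
  -- sum over n (derivative of geometric)
  have Hm : ∀ m : ℕ, HasSum (fun n => f m n)
      (q ^ (m + 1) / (1 - q ^ (m + 1)) ^ 2 / ((m : ℝ) + 1)) := by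
    intro m
    have h0 : HasSum (fun n : ℕ => (n : ℝ) * (q ^ (m + 1)) ^ n)
        (q ^ (m + 1) / (1 - q ^ (m + 1)) ^ 2) := by
      apply hasSum_coe_mul_geometric_of_norm_lt_one
      rw [Real.norm_eq_abs, abs_of_pos (hqn0 m)]; exact hqn1 m
    have h1 := (hasSum_nat_add_iff'
      (f := fun n : ℕ => (n : ℝ) * (q ^ (m + 1)) ^ n) 1).mpr h0
    simp only [Finset.range_one, Finset.sum_singleton, Nat.cast_zero, zero_mul,
      sub_zero, Nat.cast_add, Nat.cast_one] at h1
    have h2 := h1.div_const ((m : ℝ) + 1)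
    have heq : (fun n : ℕ => f m n)
        = fun n : ℕ => ((n : ℝ) + 1) * (q ^ (m + 1)) ^ (n + 1) / ((m : ℝ) + 1) := by
      funext n
      simp only [hfdef]
      rw [← pow_mul, mul_comm (n + 1) (m + 1), pow_mul]
      ring
    rw [heq]
    convert h2 using 1
  -- summability of the uncurried family
  have hF : Summable (Function.uncurry f) := by
    refine (summable_prod_of_nonneg (fun p => hf_nonneg p.1 p.2)).mpr ⟨?_, ?_⟩
    · intro m; exact (Hm m).summable
    · apply Summable.of_nonneg_of_le
        (f := fun m : ℕ => (1 / (1 - q) ^ 2) * q ^ (m + 1))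
      · intro m
        exact tsum_nonneg fun n => hf_nonneg m n
      · intro m
        rw [(Hm m).tsum_eq]
        have hle1 : q ^ (m + 1) ≤ q := pow_le_of_le_one hq0.le hq1.le (Nat.succ_ne_zero m)
        have h1 : (1 - q) ^ 2 ≤ (1 - q ^ (m + 1)) ^ 2 := by
          apply pow_le_pow_left₀ (by linarith) (by linarith)
        have h2 : q ^ (m + 1) / (1 - q ^ (m + 1)) ^ 2 ≤ q ^ (m + 1) / (1 - q) ^ 2 :=
          div_le_div_of_nonneg_left (le_of_lt (hqn0 m)) (pow_pos (by linarith : (0:ℝ) < 1 - q) 2) h1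
        have h3 : q ^ (m + 1) / (1 - q ^ (m + 1)) ^ 2 / ((m : ℝ) + 1)
            ≤ q ^ (m + 1) / (1 - q ^ (m + 1)) ^ 2 :=
          div_le_self (by positivity) (by linarith [Nat.cast_nonneg (α := ℝ) m])
        calc q ^ (m + 1) / (1 - q ^ (m + 1)) ^ 2 / ((m : ℝ) + 1)
            ≤ q ^ (m + 1) / (1 - q ^ (m + 1)) ^ 2 := h3
          _ ≤ q ^ (m + 1) / (1 - q) ^ 2 := h2
          _ = (1 / (1 - q) ^ 2) * q ^ (m + 1) := by ring
      · apply Summable.congr ((summable_geometric_of_lt_one hq0.le hq1).mul_left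
          ((1 / (1 - q) ^ 2) * q))
        intro m
        rw [pow_succ]
        ring
  -- the log terms
  set L : ℕ → ℝ :=
    fun n => Real.log ((1 - q ^ (n + 1)) ^ (-((n : ℤ) + 1))) with hLdef
  have hL : ∀ n, L n = ∑' m, f m n := by
    intro n
    rw [hLdef]
    simp only
    rw [Real.log_zpow, (Hn n).tsum_eq]
    push_cast
    ring
  have hsumL : Summable L := by
    have h1 := (summable_prod_of_nonneg
      (f := fun p : ℕ × ℕ => Function.uncurry f p.swap)
      (fun p => hf_nonneg p.2 p.1)).mp hF.prod_symm
    apply Summable.congr h1.2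
    intro n
    exact (hL n).symm
  -- identify the tsum of L with the RHS
  have hRHS : ∀ m : ℕ, q ^ (m + 1) / (1 - q ^ (m + 1)) ^ 2 / ((m : ℝ) + 1)
      = (1 / Real.sinh (((m : ℝ) + 1) * x / 2)) ^ 2 / (4 * ((m : ℝ) + 1)) := by
    intro m
    have hu : 0 < ((m : ℝ) + 1) * x / 2 := by positivity
    have h2u : -(2 * (((m : ℝ) + 1) * x / 2)) = -((m : ℝ) + 1) * x := by ring
    have := csch_aux hu
    rw [h2u, hexp m] at this
    rw [this]
    rw [div_div]
  have htsum : ∑' n, L n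
      = ∑' k : ℕ, (1 / Real.sinh (((k : ℝ) + 1) * x / 2)) ^ 2 / (4 * ((k : ℝ) + 1)) := by
    calc ∑' n, L n = ∑' n, ∑' m, f m n := tsum_congr hL
      _ = ∑' m, ∑' n, f m n := by
          apply Summable.tsum_comm' hF (fun m => (Hm m).summable)
          intro n; exact (Hn n).summable
      _ = ∑' m : ℕ, q ^ (m + 1) / (1 - q ^ (m + 1)) ^ 2 / ((m : ℝ) + 1) :=
          tsum_congr fun m => (Hm m).tsum_eq
      _ = _ := tsum_congr hRHS
  -- convert sum of logs into log of product
  have hpos : ∀ n : ℕ, 0 < (1 - q ^ (n + 1)) ^ (-((n : ℤ) + 1)) := by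
    intro n
    exact zpow_pos (h1q n) _
  have hfun : (fun n : ℕ => (1 - q ^ (n + 1)) ^ (-((n : ℤ) + 1))) = Real.exp ∘ L := by
    funext n
    simp only [Function.comp, hLdef]
    exact (Real.exp_log (hpos n)).symm
  have hprod : HasProd (fun n : ℕ => (1 - q ^ (n + 1)) ^ (-((n : ℤ) + 1)))
      (Real.exp (∑' n, L n)) := by
    rw [hfun]
    exact hsumL.hasSum.rexp
  have hprodeq :
      (∏' n : ℕ, (1 - Real.exp (-((n : ℝ) + 1) * x)) ^ (-((n : ℤ) + 1)))
        = Real.exp (∑' n, L n) := by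
    rw [tprod_congr (fun n => by rw [hexp n])]
    exact hprod.tprod_eq
  rw [hprodeq, Real.log_exp, htsum]
end

section
/- The Mellin transform of ln M(e^{-x}) equals Γ(s) ζ(s-1) ζ(s+1) for Re s > 2; that is, ∫_0^∞ x^{s-1} ln M(e^{-x}) dx = Γ(s) ζ(s-1) ζ(s+1), where M(q) = ∏_{n≥1}(1-q^n)^{-n}. -/
open MeasureTheory Real Set

lemma macmahon_hasSum_log (t : ℝ) (ht : 0 < t) :
    HasSum (fun q : ℕ × ℕ ↦ ((q.1 : ℝ) + 1) / ((q.2 : ℝ) + 1) *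
        rexp (-(((q.1 : ℝ) + 1) * ((q.2 : ℝ) + 1)) * t))
      (Real.log (∏' n : ℕ, (1 - Real.exp (-((n : ℝ) + 1) * t)) ^ (-((n : ℤ) + 1)))) := by
  set y : ℕ → ℝ := fun n ↦ rexp (-((n : ℝ) + 1) * t) with hy
  have hy0 : ∀ n, 0 < y n := fun n ↦ exp_pos _
  have hy1 : ∀ n, y n < 1 := fun n ↦ exp_lt_one_iff.2 (by nlinarith [Nat.cast_nonneg (α := ℝ) n])
  have h1y : ∀ n, 0 < 1 - y n := fun n ↦ by linarith [hy1 n]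
  set l : ℕ → ℝ := fun n ↦ ((n : ℝ) + 1) * (-Real.log (1 - y n)) with hl
  -- rows
  have hrow : ∀ n : ℕ, HasSum (fun k : ℕ ↦ ((n : ℝ) + 1) / ((k : ℝ) + 1) *
      rexp (-(((n : ℝ) + 1) * ((k : ℝ) + 1)) * t)) (l n) := by
    intro n
    have h := (hasSum_pow_div_log_of_abs_lt_one
      (x := y n) (by rw [abs_of_pos (hy0 n)]; exact hy1 n)).mul_left ((n : ℝ) + 1)
    refine h.congr_fun fun k ↦ ?_
    have he : -(((n : ℝ) + 1) * ((k : ℝ) + 1)) * t = ((k + 1 : ℕ) : ℝ) * (-((n : ℝ) + 1) * t) := by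
      push_cast; ring
    rw [he, Real.exp_nat_mul]
    simp only [hy]
    push_cast
    ring
  -- nonneg terms
  have hg0 : ∀ q : ℕ × ℕ, 0 ≤ ((q.1 : ℝ) + 1) / ((q.2 : ℝ) + 1) *
      rexp (-(((q.1 : ℝ) + 1) * ((q.2 : ℝ) + 1)) * t) := fun q ↦ by positivity
  have hl0 : ∀ n, 0 ≤ l n := fun n ↦ (hrow n).nonneg (fun k ↦ hg0 (n, k))
  -- summability of l
  have hlsum : Summable l := by
    have hr : rexp (-t) < 1 := exp_lt_one_iff.2 (by linarith)
    have hbase : Summable (fun n : ℕ ↦ ((n : ℝ) + 1) * rexp (-t) ^ (n + 1) / (1 - y 0)) := by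
      apply Summable.div_const
      have := summable_pow_mul_geometric_of_norm_lt_one (R := ℝ) 1
        (r := rexp (-t)) (by rwa [Real.norm_eq_abs, abs_of_pos (exp_pos _)])
      have h2 := (summable_nat_add_iff 1).2 this
      refine h2.congr fun n ↦ ?_
      push_cast
      ring
    refine hbase.of_nonneg_of_le hl0 fun n ↦ ?_
    have hyn : y n ≤ y 0 := by
      apply exp_le_exp.2
      have : (0:ℝ) ≤ (n:ℝ) * t := mul_nonneg (Nat.cast_nonneg n) ht.le
      push_cast
      linarith
    have hlog : -Real.log (1 - y n) ≤ y n / (1 - y 0) := by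
      have h1 : -Real.log (1 - y n) = Real.log (1 - y n)⁻¹ := by rw [Real.log_inv]
      rw [h1]
      calc Real.log (1 - y n)⁻¹ ≤ (1 - y n)⁻¹ - 1 :=
            log_le_sub_one_of_pos (inv_pos.2 (h1y n))
        _ = y n / (1 - y n) := by
            rw [eq_div_iff (h1y n).ne', sub_mul, inv_mul_cancel₀ (h1y n).ne']; ring
        _ ≤ y n / (1 - y 0) := by
            apply div_le_div_of_nonneg_left (hy0 n).le (by linarith [hy1 0]) (by linarith)
    have hyval : y n = rexp (-t) ^ (n + 1) := by
      rw [hy, ← Real.exp_nat_mul]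
      push_cast
      ring_nf
    calc l n ≤ ((n : ℝ) + 1) * (y n / (1 - y 0)) :=
          mul_le_mul_of_nonneg_left hlog (by positivity)
      _ = ((n : ℝ) + 1) * rexp (-t) ^ (n + 1) / (1 - y 0) := by rw [hyval]; ring
  -- summable over product
  have hgsum : Summable (fun q : ℕ × ℕ ↦ ((q.1 : ℝ) + 1) / ((q.2 : ℝ) + 1) *
      rexp (-(((q.1 : ℝ) + 1) * ((q.2 : ℝ) + 1)) * t)) := by
    rw [summable_prod_of_nonneg hg0]
    exact ⟨fun n ↦ (hrow n).summable, hlsum.congr fun n ↦ ((hrow n).tsum_eq).symm⟩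
  -- identify the tprod with exp (∑' l)
  have hfac : ∀ n : ℕ, (1 - y n) ^ (-((n : ℤ) + 1)) = rexp (l n) := by
    intro n
    rw [hl]
    have : ((1 : ℝ) - y n) ^ (-((n : ℤ) + 1)) = (1 - y n) ^ ((-((n : ℤ) + 1) : ℤ) : ℝ) := by
      rw [Real.rpow_intCast]
    rw [this, Real.rpow_def_of_pos (h1y n)]
    push_cast
    ring_nf
  have hprod : (∏' n : ℕ, (1 - y n) ^ (-((n : ℤ) + 1))) = rexp (∑' n, l n) := by
    have h2 := Real.rexp_tsum_eq_tprod (f := fun n ↦ rexp (l n)) (fun n ↦ exp_pos _)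
      (hlsum.congr fun n ↦ (Real.log_exp (l n)).symm)
    simp only [Function.comp_apply, Real.log_exp] at h2
    rw [tprod_congr hfac, ← h2]
  rw [hprod, Real.log_exp]
  -- now identify ∑' l with the double sum
  have : ∑' n, l n = ∑' q : ℕ × ℕ, ((q.1 : ℝ) + 1) / ((q.2 : ℝ) + 1) *
      rexp (-(((q.1 : ℝ) + 1) * ((q.2 : ℝ) + 1)) * t) := by
    rw [hgsum.tsum_prod' (fun n ↦ (hrow n).summable)]
    exact tsum_congr fun n ↦ ((hrow n).tsum_eq).symm
  rw [this]
  exact hgsum.hasSum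

section
open Complex

/-- The Mellin transform of `ln M(e^{-x})` is `Γ(s)ζ(s-1)ζ(s+1)` for `Re s > 2`,
where `M(q) = ∏_{n≥1}(1-qⁿ)^{-n}` is the MacMahon function. -/
theorem mellin_log_macmahon (s : ℂ) (hs : 2 < s.re) :
    ∫ x in Set.Ioi (0 : ℝ), (x : ℂ) ^ (s - 1) *
        ((Real.log (∏' n : ℕ, (1 - Real.exp (-((n : ℝ) + 1) * x)) ^ (-((n : ℤ) + 1))) : ℝ) : ℂ)
      = Complex.Gamma s * riemannZeta (s - 1) * riemannZeta (s + 1) := by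
  have hs0 : 0 < s.re := by linarith
  set F : ℝ → ℂ := fun t ↦
    ((Real.log (∏' n : ℕ, (1 - Real.exp (-((n : ℝ) + 1) * t)) ^ (-((n : ℤ) + 1))) : ℝ) : ℂ) with hF_def
  set a : ℕ × ℕ → ℂ := fun q ↦ ((((q.1 : ℝ) + 1) / ((q.2 : ℝ) + 1) : ℝ) : ℂ) with ha_def
  set p : ℕ × ℕ → ℝ := fun q ↦ ((q.1 : ℝ) + 1) * ((q.2 : ℝ) + 1) with hp_def
  have hp : ∀ q, a q = 0 ∨ 0 < p q := fun q ↦ Or.inr (by positivity)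
  have hF : ∀ t ∈ Set.Ioi (0 : ℝ), HasSum (fun q ↦ a q * Real.exp (-p q * t)) (F t) := by
    intro t ht
    have h := (macmahon_hasSum_log t ht).map Complex.ofRealCLM Complex.continuous_ofReal
    refine h.congr_fun fun q ↦ ?_
    simp only [Function.comp_apply, Complex.ofRealCLM_apply, Complex.ofReal_mul, ha_def, hp_def]
  have h_sum : Summable fun q : ℕ × ℕ ↦ ‖a q‖ / (p q) ^ s.re := by
    set σ := s.re
    have hf1 : Summable (fun n : ℕ ↦ ((n : ℝ) + 1) ^ (1 - σ)) := by
      have h := (Real.summable_nat_rpow (p := 1 - σ)).2 (by linarith)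
      have h2 := (summable_nat_add_iff 1).2 h
      exact h2.congr fun n ↦ by push_cast; ring_nf
    have hf2 : Summable (fun k : ℕ ↦ ((k : ℝ) + 1) ^ (-(1 + σ))) := by
      have h := (Real.summable_nat_rpow (p := -(1 + σ))).2 (by linarith)
      have h2 := (summable_nat_add_iff 1).2 h
      exact h2.congr fun n ↦ by push_cast; ring_nf
    have := hf1.mul_of_nonneg hf2 (fun n ↦ by positivity) (fun k ↦ by positivity)
    refine this.congr fun q ↦ ?_
    obtain ⟨n, k⟩ := q
    have hn : (0:ℝ) < (n : ℝ) + 1 := by positivity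
    have hk : (0:ℝ) < (k : ℝ) + 1 := by positivity
    have habs : ‖a (n, k)‖ = ((n : ℝ) + 1) / ((k : ℝ) + 1) := by
      simp only [ha_def, Complex.norm_real, Real.norm_eq_abs]
      exact _root_.abs_of_nonneg (by positivity)
    rw [habs]
    simp only [hp_def]
    rw [Real.mul_rpow hn.le hk.le, Real.rpow_sub hn, Real.rpow_one,
      Real.rpow_neg hk.le, Real.rpow_add hk, Real.rpow_one]
    have h1 : ((n:ℝ)+1) ^ σ ≠ 0 := by positivity
    have h2 : ((k:ℝ)+1) ^ σ ≠ 0 := by positivity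
    simp only [div_eq_mul_inv, mul_inv]
    ring
  have key := hasSum_mellin hp hs0 hF h_sum
  -- second HasSum: explicit value
  have h1 : 1 < (s - 1).re := by simp only [Complex.sub_re, Complex.one_re]; linarith
  have h2 : 1 < (s + 1).re := by simp only [Complex.add_re, Complex.one_re]; linarith
  have hnorm : ∀ (w : ℂ) (n : ℕ), 1 < w.re → ‖1 / ((n : ℂ) + 1) ^ w‖ = ((n : ℝ) + 1) ^ (-w.re) := by
    intro w n hw
    have hn : (0:ℝ) < (n : ℝ) + 1 := by positivity
    rw [norm_div, norm_one,
      show ((n : ℂ) + 1) = (((n : ℝ) + 1 : ℝ) : ℂ) by push_cast; ring,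
      Complex.norm_cpow_eq_rpow_re_of_pos hn, Real.rpow_neg hn.le, one_div]
  have hsummable : ∀ (w : ℂ), 1 < w.re → Summable (fun n : ℕ ↦ 1 / ((n : ℂ) + 1) ^ w) := by
    intro w hw
    apply Summable.of_norm
    have h := (Real.summable_nat_rpow (p := -w.re)).2 (by linarith)
    have h2 := (summable_nat_add_iff 1).2 h
    refine (h2.congr fun n ↦ by push_cast; ring_nf).congr fun n ↦ (hnorm w n hw).symm
  have hu : HasSum (fun n : ℕ ↦ 1 / ((n : ℂ) + 1) ^ (s - 1)) (riemannZeta (s - 1)) := by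
    rw [zeta_eq_tsum_one_div_nat_add_one_cpow h1]
    exact (hsummable _ h1).hasSum
  have hv : HasSum (fun k : ℕ ↦ 1 / ((k : ℂ) + 1) ^ (s + 1)) (riemannZeta (s + 1)) := by
    rw [zeta_eq_tsum_one_div_nat_add_one_cpow h2]
    exact (hsummable _ h2).hasSum
  have hmul : Summable (fun q : ℕ × ℕ ↦
      (1 / ((q.1 : ℂ) + 1) ^ (s - 1)) * (1 / ((q.2 : ℂ) + 1) ^ (s + 1))) := by
    apply Summable.of_norm
    have := ((hsummable _ h1).norm).mul_of_nonneg ((hsummable _ h2).norm)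
      (fun n ↦ norm_nonneg _) (fun k ↦ norm_nonneg _)
    exact this.congr fun q ↦ (norm_mul _ _).symm
  have key2 := (hu.mul hv hmul).mul_left (Complex.Gamma s)
  have hterm : ∀ q : ℕ × ℕ, Complex.Gamma s * a q / (p q : ℂ) ^ s =
      Complex.Gamma s * ((1 / ((q.1 : ℂ) + 1) ^ (s - 1)) * (1 / ((q.2 : ℂ) + 1) ^ (s + 1))) := by
    rintro ⟨n, k⟩
    set N : ℂ := (n : ℂ) + 1 with hN_def
    set K : ℂ := (k : ℂ) + 1 with hK_def
    have hN : N ≠ 0 := by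
      rw [hN_def, show ((n : ℂ) + 1) = ((n + 1 : ℕ) : ℂ) by push_cast; ring]
      exact_mod_cast Nat.succ_ne_zero n
    have hK : K ≠ 0 := by
      rw [hK_def, show ((k : ℂ) + 1) = ((k + 1 : ℕ) : ℂ) by push_cast; ring]
      exact_mod_cast Nat.succ_ne_zero k
    have haq : a (n, k) = N / K := by
      simp only [ha_def, Complex.ofReal_div]; push_cast; rfl
    have hpq : ((p (n, k) : ℝ) : ℂ) ^ s = N ^ s * K ^ s := by
      simp only [hp_def, Complex.ofReal_mul]
      rw [mul_cpow_ofReal_nonneg (by positivity) (by positivity)]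
      push_cast; rfl
    have hNs : N ^ s = N ^ (s - 1) * N := by
      conv_lhs => rw [show s = (s - 1) + 1 by ring]
      rw [Complex.cpow_add _ _ hN, Complex.cpow_one]
    have hKs : K ^ (s + 1) = K ^ s * K := by
      rw [Complex.cpow_add _ _ hK, Complex.cpow_one]
    have hN1 : N ^ (s - 1) ≠ 0 := by
      simp [Complex.cpow_eq_zero_iff, hN]
    have hK1 : K ^ s ≠ 0 := by
      simp [Complex.cpow_eq_zero_iff, hK]
    rw [haq, hpq, hNs, hKs]
    field_simp
  have key3 : HasSum (fun q : ℕ × ℕ ↦ Complex.Gamma s * a q / (p q : ℂ) ^ s)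
      (Complex.Gamma s * (riemannZeta (s - 1) * riemannZeta (s + 1))) :=
    key2.congr_fun fun q ↦ hterm q
  have hval := key.unique key3
  have hmellin : mellin F s = ∫ x in Set.Ioi (0 : ℝ), (x : ℂ) ^ (s - 1) * F x := by
    rw [mellin]; simp only [smul_eq_mul]
  rw [← mul_assoc] at hval
  calc ∫ x in Set.Ioi (0 : ℝ), (x : ℂ) ^ (s - 1) *
        ((Real.log (∏' n : ℕ, (1 - Real.exp (-((n : ℝ) + 1) * x)) ^ (-((n : ℤ) + 1))) : ℝ) : ℂ)
      = mellin F s := hmellin.symm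
    _ = _ := hval

end
end
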